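/- In BS(1,2) with generating set {a, b}, for every m ≥ 1 the word length satisfies |aᵐ| ≥ log₂(m)/2. More precisely, if w is any word of length ℓ in {a,a⁻¹,b,b⁻¹} representing aᵐ under the matrix representation a ↦ [[1,1],[0,1]], b ↦ [[1/2,0],[0,1]], then m ≤ 4^ℓ. -/

import Mathlib

/-- The defining relation of the Baumslag-Solitar group BS(1,2) = ⟨a, b | a b = b a²⟩. -/
def BSRels : Set (FreeGroup Bool) :=
  {FreeGroup.of true * FreeGroup.of false *
    (FreeGroup.of false * FreeGroup.of true * FreeGroup.of true)⁻¹}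

/-- The Baumslag-Solitar group BS(1,2). -/
abbrev BS12 := PresentedGroup BSRels

/-- `a` generator of BS(1,2). -/
noncomputable def bsa : BS12 := PresentedGroup.of true
/-- `b` generator of BS(1,2). -/
noncomputable def bsb : BS12 := PresentedGroup.of false

/-- Word length of `g` with respect to the generators `{a, b}` and their inverses. -/
noncomputable def wordLength (g : BS12) : ℕ :=
  sInf {n : ℕ | ∃ l : List BS12,
    (∀ x ∈ l, x ∈ ({bsa, bsa⁻¹, bsb, bsb⁻¹} : Set BS12)) ∧ l.length = n ∧ l.prod = g}

noncomputable def Ap : Equiv.Perm ℚ := Equiv.addRight 1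
noncomputable def Bp : Equiv.Perm ℚ := Equiv.mulLeft₀ (2⁻¹ : ℚ) (by norm_num)

lemma Ap_apply (x:ℚ) : Ap x = x + 1 := by simp [Ap]
lemma Ap_inv_apply (x:ℚ) : Ap⁻¹ x = x - 1 := by simp [Ap]; ring
lemma Bp_apply (x:ℚ) : Bp x = 2⁻¹ * x := by simp [Bp]
lemma Bp_inv_apply (x:ℚ) : Bp⁻¹ x = 2 * x := by
  simp [Bp, Equiv.Perm.inv_def, Equiv.symm_apply_eq]

lemma key (l : List (Equiv.Perm ℚ))
    (h : ∀ x ∈ l, x ∈ ({Ap, Ap⁻¹, Bp, Bp⁻¹} : Set (Equiv.Perm ℚ))) :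
    ∃ (k : ℤ) (t : ℚ), |t| ≤ 4 ^ l.length ∧ ∀ x : ℚ, l.prod x = 2^k * x + t := by
  induction l with
  | nil => exact ⟨0, 0, by norm_num, fun x => by simp⟩
  | cons g l ih =>
    obtain ⟨k, t, ht, heq⟩ := ih (fun x hx => h x (List.mem_cons_of_mem _ hx))
    have habs : |t| ≤ (4:ℚ) ^ l.length := ht
    have h4 : (1:ℚ) ≤ 4 ^ l.length := one_le_pow₀ (by norm_num)
    have hg := h g List.mem_cons_self
    have hprod : ∀ x : ℚ, (g :: l).prod x = g (l.prod x) := fun x => by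
      rw [List.prod_cons, Equiv.Perm.mul_apply]
    rcases hg with hg | hg | hg | hg
    · refine ⟨k, t + 1, ?_, fun x => by rw [hprod, heq, hg, Ap_apply]; ring⟩
      calc |t + 1| ≤ |t| + 1 := abs_add_le _ _
        _ ≤ 4 ^ l.length + 4 ^ l.length := by linarith
        _ ≤ 4 ^ (g :: l).length := by
            rw [List.length_cons, pow_succ]; nlinarith
    · refine ⟨k, t - 1, ?_, fun x => by rw [hprod, heq, hg, Ap_inv_apply]; ring⟩
      calc |t - 1| ≤ |t| + 1 := abs_sub _ _
        _ ≤ 4 ^ l.length + 4 ^ l.length := by linarith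
        _ ≤ 4 ^ (g :: l).length := by
            rw [List.length_cons, pow_succ]; nlinarith
    · refine ⟨k - 1, t / 2, ?_, fun x => ?_⟩
      · rw [abs_div]
        calc |t| / |(2:ℚ)| ≤ |t| := by rw [abs_two]; linarith [abs_nonneg t]
          _ ≤ 4 ^ l.length := habs
          _ ≤ 4 ^ (g :: l).length := by
              rw [List.length_cons, pow_succ]; nlinarith
      · rw [hprod, heq, hg, Bp_apply, zpow_sub₀ (by norm_num : (2:ℚ) ≠ 0)]
        ring
    · refine ⟨k + 1, 2 * t, ?_, fun x => ?_⟩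
      · rw [abs_mul, abs_two]
        calc 2 * |t| ≤ 2 * 4 ^ l.length := by linarith
          _ ≤ 4 ^ (g :: l).length := by
              rw [List.length_cons, pow_succ]; nlinarith
      · rw [hprod, heq, hg, Bp_inv_apply, zpow_add₀ (by norm_num : (2:ℚ) ≠ 0)]
        ring

lemma rel_holds : ∀ r ∈ BSRels,
    FreeGroup.lift (fun x : Bool => if x then Ap else Bp) r = 1 := by
  intro r hr
  rcases hr with rfl
  have key : Ap * Bp = Bp * Ap * Ap := by
    ext x; simp [Ap, Bp, Equiv.Perm.mul_apply]; ring
  simp only [map_mul, map_inv, FreeGroup.lift_apply_of, Bool.false_eq_true, if_true, if_false]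
  rw [key]
  group

noncomputable def φ : BS12 →* Equiv.Perm ℚ := PresentedGroup.toGroup rel_holds

lemma φ_a : φ bsa = Ap := PresentedGroup.toGroup.of rel_holds
lemma φ_b : φ bsb = Bp := PresentedGroup.toGroup.of rel_holds

lemma Apow (m : ℕ) : (Ap ^ m) (0:ℚ) = m := by
  induction m with
  | zero => simp
  | succ n ih => rw [pow_succ', Equiv.Perm.mul_apply, ih, Ap_apply]; push_cast; ring

theorem bs12_wordLength_pow_a_lower_bound (m : ℕ) (hm : 1 ≤ m) :
    (∀ l : List BS12,
      (∀ x ∈ l, x ∈ ({bsa, bsa⁻¹, bsb, bsb⁻¹} : Set BS12)) → l.prod = bsa ^ m →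
        m ≤ 4 ^ l.length) ∧
    Real.logb 2 m / 2 ≤ (wordLength (bsa ^ m) : ℝ) := by
  have part1 : ∀ l : List BS12,
      (∀ x ∈ l, x ∈ ({bsa, bsa⁻¹, bsb, bsb⁻¹} : Set BS12)) → l.prod = bsa ^ m →
        m ≤ 4 ^ l.length := by
    intro l hl hprod
    have hmem : ∀ x ∈ l.map φ, x ∈ ({Ap, Ap⁻¹, Bp, Bp⁻¹} : Set (Equiv.Perm ℚ)) := by
      intro x hx
      obtain ⟨y, hy, rfl⟩ := List.mem_map.mp hx
      rcases hl y hy with h | h | h | h <;> subst h <;>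
        simp [φ_a, φ_b, map_inv, Set.mem_insert_iff]
    obtain ⟨k, t, ht, heq⟩ := key (l.map φ) hmem
    have hprod' : (l.map φ).prod = Ap ^ m := by
      rw [← map_list_prod φ l, hprod, map_pow, φ_a]
    have h0 : ((l.map φ).prod) (0:ℚ) = m := by rw [hprod', Apow]
    have hmt : (m:ℚ) = t := by rw [← h0, heq]; ring
    have hlen : (l.map φ).length = l.length := List.length_map _
    have hfin : (m:ℚ) ≤ 4 ^ l.length := by
      rw [hmt]
      calc t ≤ |t| := le_abs_self t
        _ ≤ 4 ^ (l.map φ).length := ht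
        _ = 4 ^ l.length := by rw [hlen]
    exact_mod_cast hfin
  refine ⟨part1, ?_⟩
  set W := wordLength (bsa ^ m) with hW
  have hne : {n : ℕ | ∃ l : List BS12,
      (∀ x ∈ l, x ∈ ({bsa, bsa⁻¹, bsb, bsb⁻¹} : Set BS12)) ∧ l.length = n ∧
      l.prod = bsa ^ m}.Nonempty := by
    refine ⟨m, List.replicate m bsa, ?_, List.length_replicate, List.prod_replicate _ _⟩
    intro x hx
    rw [List.eq_of_mem_replicate hx]
    exact Set.mem_insert _ _
  obtain ⟨l, hl, hlen, hprod⟩ := Nat.sInf_mem hne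
  have hmW : m ≤ 4 ^ W := by have h := part1 l hl hprod; rw [hlen] at h; exact h
  have hmR : (m:ℝ) ≤ 4 ^ W := by exact_mod_cast hmW
  have h1 : Real.logb 2 m ≤ Real.logb 2 (4 ^ W) := by
    apply Real.logb_le_logb_of_le (by norm_num) (by exact_mod_cast hm) hmR
  have h2 : Real.logb 2 ((4:ℝ) ^ W) = 2 * W := by
    rw [show (4:ℝ) = 2 ^ (2:ℕ) by norm_num, ← pow_mul, Real.logb_pow,
      Real.logb_self_eq_one (by norm_num)]
    push_cast; ring
  rw [h2] at h1
  linarith
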